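/- Let I be an infinite linear order. Then ‖·‖_F is a norm on the ℚ-vector space B_I: for all x, y ∈ B_I and q ∈ ℚ, (i) 0 ≤ ‖x‖_F < ∞; (ii) ‖x‖_F = 0 if and only if x = 0; (iii) ‖q·x‖_F = |q|·‖x‖_F; (iv) ‖x + y‖_F ≤ ‖x‖_F + ‖y‖_F. Moreover the cardinality of B_I equals the cardinality of I. -/

import Mathlib

open Pointwise

/-- For a strictly increasing finite sequence `t : Fin n → I`, the functional
`f_t(∑ a_i x_i) = ∑_{l<n} a_{t l}/ln(l+2)` on `B_I = (I →₀ ℚ)`. -/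
noncomputable def seqFunctional {I : Type*} [LinearOrder I] {n : ℕ}
    (t : Fin n → I) (x : I →₀ ℚ) : ℝ :=
  ∑ l : Fin n, (x (t l) : ℝ) / Real.log ((l : ℕ) + 2)

/-- The set of values `|f(x)|` for `f ∈ F`, i.e. over all strictly increasing
finite sequences of elements of `I`. -/
def normValueSet {I : Type*} [LinearOrder I] (x : I →₀ ℚ) : Set ℝ :=
  {r : ℝ | ∃ (n : ℕ) (t : Fin n → I), StrictMono t ∧ r = |seqFunctional t x|}

/-- The norm `‖x‖_F = sup {|f(x)| : f ∈ F}` on `B_I`. -/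
noncomputable def Fnorm {I : Type*} [LinearOrder I] (x : I →₀ ℚ) : ℝ :=
  sSup (normValueSet x)

lemma zero_mem_normValueSet {I : Type*} [LinearOrder I] (x : I →₀ ℚ) :
    (0 : ℝ) ∈ normValueSet x :=
  ⟨0, Fin.elim0, fun i => i.elim0, by simp [seqFunctional]⟩

lemma normValueSet_nonempty {I : Type*} [LinearOrder I] (x : I →₀ ℚ) :
    (normValueSet x).Nonempty := ⟨0, zero_mem_normValueSet x⟩

lemma log_two_pos' : (0 : ℝ) < Real.log 2 := Real.log_pos (by norm_num)

lemma abs_seqFunctional_le {I : Type*} [LinearOrder I] {n : ℕ}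
    {t : Fin n → I} (ht : StrictMono t) (x : I →₀ ℚ) :
    |seqFunctional t x| ≤ (∑ i ∈ x.support, |(x i : ℝ)|) / Real.log 2 := by
  have h2 : (0:ℝ) < Real.log 2 := log_two_pos'
  calc |seqFunctional t x| ≤ ∑ l : Fin n, |(x (t l) : ℝ) / Real.log ((l : ℕ) + 2)| :=
        Finset.abs_sum_le_sum_abs _ _
    _ = ∑ l : Fin n, |(x (t l) : ℝ)| / Real.log ((l : ℕ) + 2) := by
        refine Finset.sum_congr rfl fun l _ => ?_
        rw [abs_div, abs_of_pos (Real.log_pos (by push_cast; linarith))]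
    _ ≤ ∑ l : Fin n, |(x (t l) : ℝ)| / Real.log 2 := by
        refine Finset.sum_le_sum fun l _ => ?_
        refine div_le_div_of_nonneg_left (abs_nonneg _) log_two_pos' ?_
        apply Real.log_le_log (by norm_num)
        push_cast; linarith
    _ = (∑ l : Fin n, |(x (t l) : ℝ)|) / Real.log 2 := by rw [Finset.sum_div]
    _ ≤ (∑ i ∈ x.support, |(x i : ℝ)|) / Real.log 2 := by
        refine (div_le_div_iff_of_pos_right h2).mpr ?_
        have h1 : ∑ l : Fin n, |(x (t l) : ℝ)| = ∑ i ∈ Finset.univ.image t, |(x i : ℝ)| := by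
          rw [Finset.sum_image (fun a _ b _ h => ht.injective h)]
        have hh : ∑ i ∈ Finset.univ.image t, |(x i : ℝ)|
            = ∑ i ∈ (Finset.univ.image t).filter (· ∈ x.support), |(x i : ℝ)| := by
          rw [Finset.sum_filter_of_ne]
          intro i _ h
          simp only [Finsupp.mem_support_iff]
          intro h0
          exact h (by simp [h0])
        rw [h1, hh]
        exact Finset.sum_le_sum_of_subset_of_nonneg
          (fun i hi => (Finset.mem_filter.mp hi).2) (fun _ _ _ => abs_nonneg _)

lemma bddAbove_normValueSet {I : Type*} [LinearOrder I] (x : I →₀ ℚ) :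
    BddAbove (normValueSet x) := by
  refine ⟨(∑ i ∈ x.support, |(x i : ℝ)|) / Real.log 2, ?_⟩
  rintro r ⟨n, t, ht, rfl⟩
  exact abs_seqFunctional_le ht x

lemma abs_le_Fnorm {I : Type*} [LinearOrder I] {n : ℕ} {t : Fin n → I}
    (ht : StrictMono t) (x : I →₀ ℚ) : |seqFunctional t x| ≤ Fnorm x :=
  le_csSup (bddAbove_normValueSet x) ⟨n, t, ht, rfl⟩

lemma seqFunctional_add {I : Type*} [LinearOrder I] {n : ℕ} (t : Fin n → I)
    (x y : I →₀ ℚ) : seqFunctional t (x + y) = seqFunctional t x + seqFunctional t y := by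
  simp [seqFunctional, ← Finset.sum_add_distrib, add_div]

lemma seqFunctional_smul {I : Type*} [LinearOrder I] {n : ℕ} (t : Fin n → I)
    (q : ℚ) (x : I →₀ ℚ) : seqFunctional t (q • x) = (q : ℝ) * seqFunctional t x := by
  simp [seqFunctional, Finset.mul_sum, mul_div_assoc]

/-- For an infinite linear order `I`, `‖·‖_F` is a norm on the ℚ-vector space `B_I`:
it is nonnegative and finite (the defining set of values is bounded above), vanishes
exactly at `0`, is absolutely homogeneous for rational scalars, and satisfies the
triangle inequality.  Moreover `|B_I| = |I|`. -/
theorem Fnorm_is_norm {I : Type*} [LinearOrder I] [Infinite I] :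
    (∀ x : I →₀ ℚ, 0 ≤ Fnorm x ∧ BddAbove (normValueSet x)) ∧
      (∀ x : I →₀ ℚ, Fnorm x = 0 ↔ x = 0) ∧
      (∀ (q : ℚ) (x : I →₀ ℚ), Fnorm (q • x) = |(q : ℝ)| * Fnorm x) ∧
      (∀ x y : I →₀ ℚ, Fnorm (x + y) ≤ Fnorm x + Fnorm y) ∧
      Cardinal.mk (I →₀ ℚ) = Cardinal.mk I := by
  have hzero : ∀ x : I →₀ ℚ, 0 ≤ Fnorm x := fun x =>
    le_csSup (bddAbove_normValueSet x) (zero_mem_normValueSet x)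
  refine ⟨fun x => ⟨hzero x, bddAbove_normValueSet x⟩, ?_, ?_, ?_, ?_⟩
  · intro x
    constructor
    · intro h
      by_contra hx
      obtain ⟨i, hi⟩ := Finsupp.ne_iff.mp hx
      simp only [Finsupp.coe_zero, Pi.zero_apply] at hi
      have hmem : |(x i : ℝ)| / Real.log 2 ∈ normValueSet x := by
        refine ⟨1, fun _ => i, Subsingleton.strictMono _, ?_⟩
        simp [seqFunctional, abs_div, abs_of_pos log_two_pos']
      have hle : |(x i : ℝ)| / Real.log 2 ≤ Fnorm x :=
        le_csSup (bddAbove_normValueSet x) hmem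
      have hpos : 0 < |(x i : ℝ)| / Real.log 2 :=
        div_pos (abs_pos.mpr (by exact_mod_cast hi)) log_two_pos'
      linarith [h ▸ hle]
    · rintro rfl
      have : normValueSet (0 : I →₀ ℚ) = {0} := by
        apply Set.eq_singleton_iff_unique_mem.mpr
        exact ⟨zero_mem_normValueSet 0, by rintro r ⟨n, t, ht, rfl⟩; simp [seqFunctional]⟩
      rw [Fnorm, this, csSup_singleton]
  · intro q x
    have hset : normValueSet (q • x) = |(q : ℝ)| • normValueSet x := by
      ext r
      constructor
      · rintro ⟨n, t, ht, rfl⟩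
        exact ⟨|seqFunctional t x|, ⟨n, t, ht, rfl⟩, by
          simp [smul_eq_mul, seqFunctional_smul, abs_mul]⟩
      · rintro ⟨s, ⟨n, t, ht, rfl⟩, rfl⟩
        exact ⟨n, t, ht, by simp [smul_eq_mul, seqFunctional_smul, abs_mul]⟩
    rw [Fnorm, hset, Real.sSup_smul_of_nonneg (abs_nonneg _), smul_eq_mul, Fnorm]
  · intro x y
    refine csSup_le (normValueSet_nonempty _) ?_
    rintro r ⟨n, t, ht, rfl⟩
    calc |seqFunctional t (x + y)| ≤ |seqFunctional t x| + |seqFunctional t y| := by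
          rw [seqFunctional_add]; exact abs_add_le _ _
      _ ≤ Fnorm x + Fnorm y := add_le_add (abs_le_Fnorm ht x) (abs_le_Fnorm ht y)
  · rw [Cardinal.mk_finsupp_lift_of_infinite, Cardinal.mkRat]
    simp [Cardinal.aleph0_le_mk I]
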